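/- The map F_II(α,β): (x,y) ↦ ((y/α)P, (x/β)P) with P = (αx−βy+β−α)/(x−y) satisfies the Yang–Baxter relation on all triples where the relevant denominators are nonzero and the parameters are nonzero. -/

import Mathlib

set_option maxHeartbeats 1600000


open Function

variable {K : Type*} [Field K]

/-- lift a map on pairs to act on coordinates 1,2 of a triple -/
def lift12 {X : Type*} (f : X × X → X × X) : X × X × X → X × X × X :=
  fun p => ((f (p.1, p.2.1)).1, (f (p.1, p.2.1)).2, p.2.2)

/-- lift to coordinates 1,3 -/
def lift13 {X : Type*} (f : X × X → X × X) : X × X × X → X × X × X :=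
  fun p => ((f (p.1, p.2.2)).1, p.2.1, (f (p.1, p.2.2)).2)

/-- lift to coordinates 2,3 -/
def lift23 {X : Type*} (f : X × X → X × X) : X × X × X → X × X × X :=
  fun p => (p.1, (f (p.2.1, p.2.2)).1, (f (p.2.1, p.2.2)).2)

def FIIMap (a b : K) : K × K → K × K :=
  fun p => ((p.2 / a) * ((a*p.1 - b*p.2 + b - a)/(p.1 - p.2)), (p.1 / b) * ((a*p.1 - b*p.2 + b - a)/(p.1 - p.2)))


lemma fdiv {K : Type*} [Field K] (A B C D : K) (hB : B ≠ 0) (hD : D ≠ 0) :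
    (A/B)/(C/D) = A*D/(B*C) := by
  field_simp

lemma crossmul {K : Type*} [Field K] (A B C D : K) (hB : B ≠ 0) (hD : D ≠ 0)
    (h : A*D = C*B) : A/B = C/D := by
  rw [div_eq_div_iff hB hD, h]

lemma mega (a1 a2 a3 x y z p1 q1 n2 d2 n3 m3 n2' d2' n3' m3' : K)
    (ep1 : p1 = a1*x - a2*y + a2 - a1)
    (en2 : n2 = y*p1 + (a3 - a3*z - a1)*(x-y))
    (ed2 : d2 = y*p1 - a1*z*(x-y))
    (em3 : m3 = a3*x*d2 - a2*y*n2)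
    (en3 : n3 = x*p1*d2 - y*p1*n2 + (a3-a2)*(x-y)*d2)
    (eq1 : q1 = a2*y - a3*z + a3 - a2)
    (en2' : n2' = (a1*x + a3 - a1)*(y-z) - y*q1)
    (ed2' : d2' = a3*x*(y-z) - y*q1)
    (en3' : n3' = y*q1*n2' - z*q1*d2' + (a2-a1)*(y-z)*d2')
    (em3' : m3' = a2*y*n2' - a1*z*d2')
    (I1 : n2*(y-z)*m3' = n3'*d2)
    (I2 : n3*d2' = n2'*(x-y)*m3)
    (hp1 : a1 ≠ 0) (hp2 : a2 ≠ 0) (hp3 : a3 ≠ 0)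
    (h1 : (x - y) ≠ 0)
    (h2 : ((lift12 (FIIMap a1 a2) (x, y, z)).1 - (lift12 (FIIMap a1 a2) (x, y, z)).2.2) ≠ 0)
    (h3 : ((lift13 (FIIMap a1 a3) (lift12 (FIIMap a1 a2) (x, y, z))).2.1 - (lift13 (FIIMap a1 a3) (lift12 (FIIMap a1 a2) (x, y, z))).2.2) ≠ 0)
    (h4 : (y - z) ≠ 0)
    (h5 : ((lift23 (FIIMap a2 a3) (x, y, z)).1 - (lift23 (FIIMap a2 a3) (x, y, z)).2.2) ≠ 0)
    (h6 : ((lift13 (FIIMap a1 a3) (lift23 (FIIMap a2 a3) (x, y, z))).1 - (lift13 (FIIMap a1 a3) (lift23 (FIIMap a2 a3) (x, y, z))).2.1) ≠ 0) :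
    lift23 (FIIMap a2 a3) (lift13 (FIIMap a1 a3) (lift12 (FIIMap a1 a2) (x, y, z))) =
      lift12 (FIIMap a1 a2) (lift13 (FIIMap a1 a3) (lift23 (FIIMap a2 a3) (x, y, z))) := by
  have E1 : lift12 (FIIMap a1 a2) (x, y, z) = (y*p1/(a1*(x-y)), x*p1/(a2*(x-y)), z) := by
    simp only [lift12, FIIMap, Prod.mk.injEq]
    refine ⟨?_, ?_, trivial⟩ <;> (rw [ep1]; field_simp; try ring)
  rw [E1] at h2 h3 ⊢
  dsimp only at h2
  have hd1 : y*p1/(a1*(x-y)) - z = d2/(a1*(x-y)) := by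
    rw [ed2]; field_simp
  have hd2 : d2 ≠ 0 := fun hc => h2 (by rw [hd1, hc, zero_div])
  have hn2e : a1*(y*p1/(a1*(x-y))) - a3*z + a3 - a1 = n2/(x-y) := by
    rw [en2]; field_simp; ring
  have E2 : lift13 (FIIMap a1 a3) (y*p1/(a1*(x-y)), x*p1/(a2*(x-y)), z) = (z*n2/d2, x*p1/(a2*(x-y)), y*p1*n2/(a3*(x-y)*d2)) := by
    simp only [lift13, FIIMap, Prod.mk.injEq]
    refine ⟨?_, trivial, ?_⟩ <;>
      (rw [hd1, hn2e, fdiv _ _ _ _ h1 (mul_ne_zero hp1 h1)];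
       simp only [div_div, div_mul_div_comm];
       refine crossmul _ _ _ _ ?_ ?_ (by ring) <;>
         (repeat first | apply mul_ne_zero | assumption))
  rw [E2] at h3 ⊢
  dsimp only at h3
  have hd3 : x*p1/(a2*(x-y)) - y*p1*n2/(a3*(x-y)*d2) = p1*m3/(a2*a3*(x-y)*d2) := by
    rw [em3]; field_simp
  have hP1 : p1 ≠ 0 := fun hc => h3 (by rw [hd3, hc, zero_mul, zero_div])
  have hm3 : m3 ≠ 0 := fun hc => h3 (by rw [hd3, hc, mul_zero, zero_div])
  have hn3e : a2*(x*p1/(a2*(x-y))) - a3*(y*p1*n2/(a3*(x-y)*d2)) + a3 - a2 = n3/((x-y)*d2) := by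
    rw [en3]; field_simp; ring
  have E3 : lift23 (FIIMap a2 a3) (z*n2/d2, x*p1/(a2*(x-y)), y*p1*n2/(a3*(x-y)*d2)) = (z*n2/d2, y*n2*n3/((x-y)*d2*m3), x*n3/((x-y)*m3)) := by
    simp only [lift23, FIIMap, Prod.mk.injEq]
    refine ⟨trivial, ?_, ?_⟩ <;>
      (rw [hd3, hn3e, fdiv _ _ _ _ (mul_ne_zero h1 hd2)
            (mul_ne_zero (mul_ne_zero (mul_ne_zero hp2 hp3) h1) hd2)];
       simp only [div_div, div_mul_div_comm];
       refine crossmul _ _ _ _ ?_ ?_ (by ring) <;>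
         (repeat first | apply mul_ne_zero | assumption))
  rw [E3]
  have E4 : lift23 (FIIMap a2 a3) (x, y, z) = (x, z*q1/(a2*(y-z)), y*q1/(a3*(y-z))) := by
    simp only [lift23, FIIMap, Prod.mk.injEq]
    refine ⟨trivial, ?_, ?_⟩ <;> (rw [eq1]; field_simp; try ring)
  rw [E4] at h5 h6 ⊢
  dsimp only at h5
  have hd4 : x - (y*q1/(a3*(y-z))) = d2'/(a3*(y-z)) := by
    rw [ed2']; field_simp
  have hd2' : d2' ≠ 0 := fun hc => h5 (by rw [hd4, hc, zero_div])
  have hn2e' : a1*x - a3*(y*q1/(a3*(y-z))) + a3 - a1 = n2'/(y-z) := by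
    rw [en2']; field_simp; ring
  have E5 : lift13 (FIIMap a1 a3) (x, z*q1/(a2*(y-z)), y*q1/(a3*(y-z))) = (y*q1*n2'/(a1*(y-z)*d2'), z*q1/(a2*(y-z)), x*n2'/d2') := by
    simp only [lift13, FIIMap, Prod.mk.injEq]
    refine ⟨?_, trivial, ?_⟩ <;>
      (rw [hd4, hn2e', fdiv _ _ _ _ h4 (mul_ne_zero hp3 h4)];
       simp only [div_div, div_mul_div_comm];
       refine crossmul _ _ _ _ ?_ ?_ (by ring) <;>
         (repeat first | apply mul_ne_zero | assumption))
  rw [E5] at h6 ⊢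
  dsimp only at h6
  have hd5 : y*q1*n2'/(a1*(y-z)*d2') - z*q1/(a2*(y-z)) = q1*m3'/(a1*a2*(y-z)*d2') := by
    rw [em3']; field_simp
  have hQ1 : q1 ≠ 0 := fun hc => h6 (by rw [hd5, hc, zero_mul, zero_div])
  have hm3' : m3' ≠ 0 := fun hc => h6 (by rw [hd5, hc, mul_zero, zero_div])
  have hn3e' : a1*(y*q1*n2'/(a1*(y-z)*d2')) - a2*(z*q1/(a2*(y-z))) + a2 - a1 = n3'/((y-z)*d2') := by
    rw [en3']; field_simp; ring
  have E6 : lift12 (FIIMap a1 a2) (y*q1*n2'/(a1*(y-z)*d2'), z*q1/(a2*(y-z)), x*n2'/d2') = (z*n3'/((y-z)*m3'), y*n2'*n3'/((y-z)*d2'*m3'), x*n2'/d2') := by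
    simp only [lift12, FIIMap, Prod.mk.injEq]
    refine ⟨?_, ?_, trivial⟩ <;>
      (rw [hd5, hn3e', fdiv _ _ _ _ (mul_ne_zero h4 hd2')
            (mul_ne_zero (mul_ne_zero (mul_ne_zero hp1 hp2) h4) hd2')];
       simp only [div_div, div_mul_div_comm];
       refine crossmul _ _ _ _ ?_ ?_ (by ring) <;>
         (repeat first | apply mul_ne_zero | assumption))
  rw [E6]
  simp only [Prod.mk.injEq]
  refine ⟨?_, ?_, ?_⟩
  · rw [div_eq_div_iff hd2 (mul_ne_zero h4 hm3')]
    linear_combination z*I1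
  · rw [div_eq_div_iff (mul_ne_zero (mul_ne_zero h1 hd2) hm3)
        (mul_ne_zero (mul_ne_zero h4 hd2') hm3')]
    linear_combination y*n3*d2'*I1 + y*n3'*d2*I2
  · rw [div_eq_div_iff (mul_ne_zero h1 hm3) hd2']
    linear_combination x*I2

theorem yangBaxter_FII (a1 a2 a3 x y z : K)
    (hp1 : a1 ≠ 0) (hp2 : a2 ≠ 0) (hp3 : a3 ≠ 0)
    (h1 : (x - y) ≠ 0)
    (h2 : ((lift12 (FIIMap a1 a2) (x, y, z)).1 - (lift12 (FIIMap a1 a2) (x, y, z)).2.2) ≠ 0)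
    (h3 : ((lift13 (FIIMap a1 a3) (lift12 (FIIMap a1 a2) (x, y, z))).2.1 - (lift13 (FIIMap a1 a3) (lift12 (FIIMap a1 a2) (x, y, z))).2.2) ≠ 0)
    (h4 : (y - z) ≠ 0)
    (h5 : ((lift23 (FIIMap a2 a3) (x, y, z)).1 - (lift23 (FIIMap a2 a3) (x, y, z)).2.2) ≠ 0)
    (h6 : ((lift13 (FIIMap a1 a3) (lift23 (FIIMap a2 a3) (x, y, z))).1 - (lift13 (FIIMap a1 a3) (lift23 (FIIMap a2 a3) (x, y, z))).2.1) ≠ 0) :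
    lift23 (FIIMap a2 a3) (lift13 (FIIMap a1 a3) (lift12 (FIIMap a1 a2) (x, y, z))) =
      lift12 (FIIMap a1 a2) (lift13 (FIIMap a1 a3) (lift23 (FIIMap a2 a3) (x, y, z))) := by
  exact mega a1 a2 a3 x y z (a1*x - a2*y + a2 - a1) (a2*y - a3*z + a3 - a2) (y*(a1*x - a2*y + a2 - a1) + (a3 - a3*z - a1)*(x-y)) (y*(a1*x - a2*y + a2 - a1) - a1*z*(x-y)) (x*(a1*x - a2*y + a2 - a1)*(y*(a1*x - a2*y + a2 - a1) - a1*z*(x-y)) - y*(a1*x - a2*y + a2 - a1)*(y*(a1*x - a2*y + a2 - a1) + (a3 - a3*z - a1)*(x-y)) + (a3-a2)*(x-y)*(y*(a1*x - a2*y + a2 - a1) - a1*z*(x-y))) (a3*x*(y*(a1*x - a2*y + a2 - a1) - a1*z*(x-y)) - a2*y*(y*(a1*x - a2*y + a2 - a1) + (a3 - a3*z - a1)*(x-y))) ((a1*x + a3 - a1)*(y-z) - y*(a2*y - a3*z + a3 - a2)) (a3*x*(y-z) - y*(a2*y - a3*z + a3 - a2)) (y*(a2*y - a3*z + a3 - a2)*((a1*x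 + a3 - a1)*(y-z) - y*(a2*y - a3*z + a3 - a2)) - z*(a2*y - a3*z + a3 - a2)*(a3*x*(y-z) - y*(a2*y - a3*z + a3 - a2)) + (a2-a1)*(y-z)*(a3*x*(y-z) - y*(a2*y - a3*z + a3 - a2))) (a2*y*((a1*x + a3 - a1)*(y-z) - y*(a2*y - a3*z + a3 - a2)) - a1*z*(a3*x*(y-z) - y*(a2*y - a3*z + a3 - a2)))
    rfl rfl rfl rfl rfl rfl rfl rfl rfl rfl (by ring) (by ring)
    hp1 hp2 hp3 h1 h2 h3 h4 h5 h6
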